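/- Let S(t,s) be a process on a Banach space and B a bounded set such that all pullback omega-limit sets O(B,t) are contained in a fixed compact set M and pullback attract B (lim_{s→−∞} dist(S(t,s)B, O(B,t)) = 0). If each map S(t,s) is continuous, then S(t,s) O(B,s) ⊆ O(B,t) for t ≥ s. -/
import Mathlib


open Filter Metric Bornology

/-- For a process with continuous maps, pullback omega-limit sets of a bounded
set `B` contained in a fixed compact set satisfy `S(t,s) O(B,s) ⊆ O(B,t)` for
`t ≥ s`. -/
theorem pullback_omega_limit_invariance
    {X : Type*} [NormedAddCommGroup X]
    (S : ℝ → ℝ → X → X)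
    (hid : ∀ t : ℝ, S t t = id)
    (hcomp : ∀ t l s : ℝ, s ≤ l → l ≤ t → ∀ x, S t s x = S t l (S l s x))
    (hcont : ∀ t s : ℝ, Continuous (S t s))
    (B M : Set X) (hB : IsBounded B) (hMcomp : IsCompact M)
    (O : ℝ → Set X)
    (hO : ∀ t : ℝ, O t = {x : X | ∃ (sn : ℕ → ℝ) (xn : ℕ → X),
      Tendsto sn atTop atBot ∧ (∀ n, xn n ∈ B) ∧
      Tendsto (fun n => S t (sn n) (xn n)) atTop (nhds x)})
    (hOM : ∀ t : ℝ, O t ⊆ M)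
    (hattr : ∀ t : ℝ,
      Tendsto (fun s : ℝ => ⨆ x ∈ B, infDist (S t s x) (O t)) atBot (nhds 0)) :
    ∀ t s : ℝ, s ≤ t → S t s '' O s ⊆ O t := by
  intro t s hts
  rintro _ ⟨y, hy, rfl⟩
  rw [hO s] at hy
  obtain ⟨sn, xn, hsn, hxn, hconv⟩ := hy
  rw [hO t]
  obtain ⟨N, hN⟩ := (eventually_atTop.mp (hsn.eventually (eventually_le_atBot s)))
  refine ⟨fun n => sn (n + N), fun n => xn (n + N),
    hsn.comp (tendsto_add_atTop_nat N), fun n => hxn _, ?_⟩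
  have h1 : Tendsto (fun n => S s (sn (n + N)) (xn (n + N))) atTop (nhds y) :=
    hconv.comp (tendsto_add_atTop_nat N)
  have h2 := ((hcont t s).tendsto y).comp h1
  refine h2.congr fun n => ?_
  exact ((hcomp t s (sn (n + N)) (hN _ (Nat.le_add_left N n)) hts _)).symm
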